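/- In the greedy left-to-right factorization of a sock sequence w into maximal blocks avoiding the pattern aba — obtained by repeatedly taking the longest prefix of the remaining word that avoids aba — no block boundary separates two equal adjacent letters; that is, whenever w_i = w_{i+1}, the positions i and i+1 lie in the same block. -/

import Mathlib

/-- A word `w` contains the pattern `aba`: there are indices `i < j < k`
with `w_i = w_k ≠ w_j`. A word avoiding this pattern is called *sorted*. -/
def ContainsAba (w : List ℕ) : Prop :=
  ∃ k < w.length, ∃ j < k, ∃ i < j, w.getD i 0 = w.getD k 0 ∧ w.getD i 0 ≠ w.getD j 0

instance : DecidablePred ContainsAba := fun w => by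
  unfold ContainsAba; infer_instance

/-- The length of the longest prefix of `w` that avoids the pattern `aba`. -/
def greedyBlockLen (w : List ℕ) : ℕ :=
  Nat.findGreatest (fun k => ¬ ContainsAba (w.take k)) w.length

lemma one_le_greedyBlockLen {w : List ℕ} (h : w ≠ []) : 1 ≤ greedyBlockLen w := by
  apply Nat.le_findGreatest
  · exact Nat.one_le_iff_ne_zero.mpr (by simpa using h)
  · rintro ⟨k, hk, j, hj, i, hi, -⟩
    have : (w.take 1).length ≤ 1 := by simp [List.length_take]
    omega

/-- The greedy left-to-right factorization of `w` into blocks, obtained by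
repeatedly taking the longest prefix of the remaining word that avoids the
pattern `aba`. -/
def greedyBlocks (w : List ℕ) : List (List ℕ) :=
  if h : w = [] then []
  else w.take (greedyBlockLen w) :: greedyBlocks (w.drop (greedyBlockLen w))
termination_by w.length
decreasing_by
  have h1 := one_le_greedyBlockLen h
  have h2 : 0 < w.length := List.length_pos_iff.mpr h
  simp only [List.length_drop]
  omega

/-- in the greedy factorization of `w` into maximal `aba`-avoiding
blocks, no block boundary separates two equal adjacent letters: if
`w_i = w_{i+1}`, then no nontrivial union of initial blocks has total length
exactly `i + 1`, i.e. positions `i` and `i + 1` lie in the same block. -/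

lemma getD_take_aux (w : List ℕ) {n m : ℕ} (h : m < n) : (w.take n).getD m 0 = w.getD m 0 := by
  simp [List.getD_eq_getElem?_getD, List.getElem?_take, h]

lemma getD_drop_aux (w : List ℕ) (n m : ℕ) : (w.drop n).getD m 0 = w.getD (n+m) 0 := by
  simp [List.getD_eq_getElem?_getD, List.getElem?_drop]

lemma key_extend {w : List ℕ} {i : ℕ} (hi : i + 1 < w.length)
    (heq : w.getD i 0 = w.getD (i + 1) 0)
    (h1 : ¬ ContainsAba (w.take (i+1))) : ¬ ContainsAba (w.take (i+2)) := by
  rintro ⟨k, hk, j, hj, a, ha, hac, hne⟩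
  have hlen2 : (w.take (i+2)).length ≤ i+2 := by simp [List.length_take]
  have hlen1 : (w.take (i+1)).length = i+1 := by simp [List.length_take]; omega
  have hk2 : k < i + 2 := by omega
  rw [getD_take_aux w hk2, getD_take_aux w (show a < i+2 by omega)] at hac
  rw [getD_take_aux w (show j < i+2 by omega), getD_take_aux w (show a < i+2 by omega)] at hne
  by_cases hki : k ≤ i
  · exact h1 ⟨k, by omega, j, hj, a, ha, by
      rw [getD_take_aux w (show k < i+1 by omega), getD_take_aux w (show j < i+1 by omega),
        getD_take_aux w (show a < i+1 by omega)]; exact ⟨hac, hne⟩⟩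
  · have hk1 : k = i + 1 := by omega
    subst hk1
    have hai : w.getD a 0 = w.getD i 0 := by rw [hac, ← heq]
    by_cases hji : j = i
    · exact hne (by rw [hji, ← hai, hac])
    · have hji' : j < i := by omega
      exact h1 ⟨i, by omega, j, hji', a, ha, by
        rw [getD_take_aux w (show i < i+1 by omega), getD_take_aux w (show j < i+1 by omega),
          getD_take_aux w (show a < i+1 by omega)]; exact ⟨hai, hne⟩⟩

lemma greedyBlockLen_ne {w : List ℕ} {i : ℕ} (hi : i + 1 < w.length)
    (heq : w.getD i 0 = w.getD (i + 1) 0) : greedyBlockLen w ≠ i + 1 := by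
  intro hL
  rw [greedyBlockLen, Nat.findGreatest_eq_iff] at hL
  obtain ⟨-, h1, h2⟩ := hL
  exact h2 (show i + 1 < i + 2 by omega) (by omega)
    (key_extend hi heq (h1 (by omega)))

lemma greedyBlockLen_le (w : List ℕ) : greedyBlockLen w ≤ w.length :=
  Nat.findGreatest_le _

lemma flatten_take_pos (w : List ℕ) {t : ℕ} (ht0 : 0 < t)
    (ht : t ≤ (greedyBlocks w).length) :
    0 < (((greedyBlocks w).take t).flatten).length := by
  have hw : w ≠ [] := by
    intro h; rw [greedyBlocks, dif_pos h] at ht; simp at ht; omega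
  rw [greedyBlocks, dif_neg hw]
  obtain ⟨t', rfl⟩ : ∃ t', t = t' + 1 := ⟨t - 1, by omega⟩
  simp only [List.take_succ_cons, List.flatten_cons, List.length_append, List.length_take]
  have := one_le_greedyBlockLen hw
  have h2 : 0 < w.length := List.length_pos_iff.mpr hw
  omega

lemma aux_main : ∀ n (w : List ℕ), w.length ≤ n → ∀ (i : ℕ),
    i + 1 < w.length → w.getD i 0 = w.getD (i + 1) 0 →
    ∀ (t : ℕ), 0 < t → t < (greedyBlocks w).length →
    (((greedyBlocks w).take t).flatten).length ≠ i + 1 := by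
  intro n
  induction n with
  | zero => intro w hw i hi; omega
  | succ n IH =>
    intro w hw i hi heq t ht0 ht
    have hw0 : w ≠ [] := by intro h; subst h; simp at hi
    have hL1 := one_le_greedyBlockLen hw0
    have hLle := greedyBlockLen_le w
    rw [greedyBlocks, dif_neg hw0]
    obtain ⟨t', rfl⟩ : ∃ t', t = t' + 1 := ⟨t - 1, by omega⟩
    rw [greedyBlocks, dif_neg hw0] at ht
    simp only [List.take_succ_cons, List.flatten_cons, List.length_append, List.length_take,
      List.length_cons] at ht ⊢
    by_cases hLi : greedyBlockLen w ≤ i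
    · -- boundary inside: use IH on the dropped word
      rcases Nat.eq_zero_or_pos t' with rfl | ht'
      · -- t' = 0: sum = L ≤ i < i + 1
        simp; omega
      · have hne := IH (w.drop (greedyBlockLen w)) (by simp [List.length_drop]; omega) (i - greedyBlockLen w)
          (by simp [List.length_drop]; omega)
          (by rw [getD_drop_aux, getD_drop_aux]
              have e1 : greedyBlockLen w + (i - greedyBlockLen w) = i := by omega
              have e2 : greedyBlockLen w + (i - greedyBlockLen w + 1) = i + 1 := by omega
              rw [e1, e2]; exact heq)
          t' ht' (by omega)
        omega
    · -- L ≥ i + 1 ; L ≠ i + 1 so L ≥ i + 2, plus positive rest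
      have hLne : greedyBlockLen w ≠ i + 1 := greedyBlockLen_ne hi heq
      rcases Nat.eq_zero_or_pos t' with rfl | ht'
      · simp; omega
      · have hpos := flatten_take_pos (w.drop (greedyBlockLen w)) ht' (by omega)
        omega

theorem greedyBlocks_no_boundary_in_run (w : List ℕ) (i : ℕ)
    (hi : i + 1 < w.length) (heq : w.getD i 0 = w.getD (i + 1) 0)
    (t : ℕ) (ht0 : 0 < t) (ht : t < (greedyBlocks w).length) :
    (((greedyBlocks w).take t).flatten).length ≠ i + 1 :=
  aux_main w.length w le_rfl i hi heq t ht0 ht
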